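/- For every c > 0: sup_{x ≥ c} | (ln G_ε)'(x) − 1/x | → 0 and sup_{x ≥ c} | (ln G_ε)''(x) + 1/x² | → 0 as ε → 0+; that is, on the half-line [c, ∞) the first derivative of x ↦ ln(G_ε(x)) converges uniformly to 1/x and its second derivative converges uniformly to −1/x² as ε → 0+. -/

import Mathlib

noncomputable def Geps (ε x : ℝ) : ℝ := ε * Real.log (1 + Real.exp (x / ε))

noncomputable def logGepsDeriv (ε x : ℝ) : ℝ :=
  Real.exp (x / ε) / (ε * (1 + Real.exp (x / ε)) * Real.log (1 + Real.exp (x / ε)))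

noncomputable def logGepsDeriv2 (ε x : ℝ) : ℝ :=
  (1 / ε ^ 2) * (Real.exp (x / ε) / (1 + Real.exp (x / ε)) ^ 2) *
    (1 / Real.log (1 + Real.exp (x / ε))) *
    (1 - Real.exp (x / ε) / Real.log (1 + Real.exp (x / ε)))

open Real Filter

lemma geps_split (ε x : ℝ) (hε : 0 < ε) :
    Real.log (1 + Real.exp (x / ε)) = x / ε + Real.log (1 + Real.exp (-(x / ε))) := by
  have h1 : (1 : ℝ) + Real.exp (x / ε) = Real.exp (x / ε) * (1 + Real.exp (-(x / ε))) := by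
    rw [mul_add, mul_one, ← Real.exp_add]; simp [add_comm]
  rw [h1, Real.log_mul (by positivity) (by positivity), Real.log_exp]

lemma geps_key (ε x : ℝ) (hε : 0 < ε) (hx : 0 < x) :
    1 / x - logGepsDeriv ε x
      = 1 / (ε * (1 + Real.exp (x / ε)) * Real.log (1 + Real.exp (x / ε)))
        + Real.log (1 + Real.exp (-(x / ε))) / (Real.log (1 + Real.exp (x / ε)) * x) := by
  have hE : (0:ℝ) < Real.exp (x / ε) := Real.exp_pos _
  have hL : (0:ℝ) < Real.log (1 + Real.exp (x / ε)) := Real.log_pos (by linarith)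
  have hεL : ε * Real.log (1 + Real.exp (x / ε)) = x + ε * Real.log (1 + Real.exp (-(x / ε))) := by
    rw [geps_split ε x hε, mul_add, mul_div_cancel₀ _ hε.ne']
  unfold logGepsDeriv
  set E := Real.exp (x / ε) with hEdef
  set L := Real.log (1 + E) with hLdef
  set M := Real.log (1 + Real.exp (-(x / ε))) with hMdef
  field_simp
  linear_combination (1 + E) * hεL

lemma geps_bound1 (c ε x : ℝ) (hc : 0 < c) (hε : 0 < ε) (hx : c ≤ x) :
    1 / x - logGepsDeriv ε x ≤ (1 / c + ε / c ^ 2) * Real.exp (-(c / ε)) ∧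
      0 ≤ 1 / x - logGepsDeriv ε x := by
  have hx0 : 0 < x := hc.trans_le hx
  have hE : (0:ℝ) < Real.exp (x / ε) := Real.exp_pos _
  have hL : (0:ℝ) < Real.log (1 + Real.exp (x / ε)) := Real.log_pos (by linarith)
  have hu : (0:ℝ) < Real.exp (-(x / ε)) := Real.exp_pos _
  have ht : 0 < x / ε := div_pos hx0 hε
  have hLt : x / ε ≤ Real.log (1 + Real.exp (x / ε)) := by
    rw [geps_split ε x hε]
    have : (0:ℝ) ≤ Real.log (1 + Real.exp (-(x / ε))) := Real.log_nonneg (by linarith)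
    linarith
  have hM : Real.log (1 + Real.exp (-(x / ε))) ≤ Real.exp (-(x / ε)) := by
    have := Real.log_le_sub_one_of_pos (show (0:ℝ) < 1 + Real.exp (-(x / ε)) by positivity)
    linarith
  have hM0 : (0:ℝ) ≤ Real.log (1 + Real.exp (-(x / ε))) := Real.log_nonneg (by linarith)
  have huc : Real.exp (-(x / ε)) ≤ Real.exp (-(c / ε)) := by
    apply Real.exp_le_exp.2; apply neg_le_neg; gcongr
  have key := geps_key ε x hε hx0
  have hb1 : 1 / (ε * (1 + Real.exp (x / ε)) * Real.log (1 + Real.exp (x / ε)))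
      ≤ Real.exp (-(c / ε)) / c := by
    have h1 : ε * Real.exp (x / ε) * (x / ε) ≤ ε * (1 + Real.exp (x / ε)) *
        Real.log (1 + Real.exp (x / ε)) := by gcongr <;> linarith
    have h2 : 1 / (ε * (1 + Real.exp (x / ε)) * Real.log (1 + Real.exp (x / ε)))
        ≤ 1 / (ε * Real.exp (x / ε) * (x / ε)) :=
      one_div_le_one_div_of_le (by positivity) h1
    have h3 : 1 / (ε * Real.exp (x / ε) * (x / ε)) = Real.exp (-(x / ε)) / x := by
      rw [Real.exp_neg]; field_simp
    have h4 : Real.exp (-(x / ε)) / x ≤ Real.exp (-(c / ε)) / c := by gcongr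
    linarith [h2, h3 ▸ h2]
  have hb2 : Real.log (1 + Real.exp (-(x / ε))) / (Real.log (1 + Real.exp (x / ε)) * x)
      ≤ ε * Real.exp (-(c / ε)) / c ^ 2 := by
    have h1 : Real.log (1 + Real.exp (-(x / ε))) / (Real.log (1 + Real.exp (x / ε)) * x)
        ≤ Real.exp (-(x / ε)) / ((x / ε) * x) := by gcongr
    have h2 : Real.exp (-(x / ε)) / ((x / ε) * x) = ε * Real.exp (-(x / ε)) / x ^ 2 := by
      field_simp
    have h3 : ε * Real.exp (-(x / ε)) / x ^ 2 ≤ ε * Real.exp (-(c / ε)) / c ^ 2 := by gcongr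
    calc Real.log (1 + Real.exp (-(x / ε))) / (Real.log (1 + Real.exp (x / ε)) * x)
        ≤ Real.exp (-(x / ε)) / ((x / ε) * x) := h1
      _ = ε * Real.exp (-(x / ε)) / x ^ 2 := h2
      _ ≤ ε * Real.exp (-(c / ε)) / c ^ 2 := h3
  constructor
  · rw [key]
    have : (1 / c + ε / c ^ 2) * Real.exp (-(c / ε))
        = Real.exp (-(c / ε)) / c + ε * Real.exp (-(c / ε)) / c ^ 2 := by ring
    linarith
  · rw [key]; positivity

lemma geps_deriv_nonneg (ε x : ℝ) (hε : 0 < ε) (hx : 0 < x) : 0 ≤ logGepsDeriv ε x := by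
  have hE : (0:ℝ) < Real.exp (x / ε) := Real.exp_pos _
  have hL : (0:ℝ) < Real.log (1 + Real.exp (x / ε)) := Real.log_pos (by linarith)
  unfold logGepsDeriv; positivity

lemma geps2_decomp (ε x : ℝ) (hε : 0 < ε) (hx : 0 < x) :
    logGepsDeriv2 ε x
      = Real.exp (x / ε) / (ε ^ 2 * (1 + Real.exp (x / ε)) ^ 2 * Real.log (1 + Real.exp (x / ε)))
        - (logGepsDeriv ε x) ^ 2 := by
  have hE : (0:ℝ) < Real.exp (x / ε) := Real.exp_pos _
  have hL : (0:ℝ) < Real.log (1 + Real.exp (x / ε)) := Real.log_pos (by linarith)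
  unfold logGepsDeriv2 logGepsDeriv
  field_simp

lemma geps_bound2 (c ε x : ℝ) (hc : 0 < c) (hε : 0 < ε) (hx : c ≤ x) :
    logGepsDeriv2 ε x + 1 / x ^ 2
      ≤ Real.exp (-(c / ε)) / (ε * c) + (2 / c) * ((1 / c + ε / c ^ 2) * Real.exp (-(c / ε))) ∧
      0 ≤ logGepsDeriv2 ε x + 1 / x ^ 2 := by
  have hx0 : 0 < x := hc.trans_le hx
  have hE : (0:ℝ) < Real.exp (x / ε) := Real.exp_pos _
  have hL : (0:ℝ) < Real.log (1 + Real.exp (x / ε)) := Real.log_pos (by linarith)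
  have ht : 0 < x / ε := div_pos hx0 hε
  have hLt : x / ε ≤ Real.log (1 + Real.exp (x / ε)) := by
    rw [geps_split ε x hε]
    have : (0:ℝ) ≤ Real.log (1 + Real.exp (-(x / ε))) := Real.log_nonneg
      (by linarith [Real.exp_pos (-(x / ε))])
    linarith
  have hd0 := geps_deriv_nonneg ε x hε hx0
  obtain ⟨hB1, hpos1⟩ := geps_bound1 c ε x hc hε hx
  have hdle : logGepsDeriv ε x ≤ 1 / x := by linarith
  have hdc : logGepsDeriv ε x ≤ 1 / c := le_trans hdle (by gcongr)
  have hxc : 1 / x ≤ 1 / c := by gcongr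
  have huc : Real.exp (-(x / ε)) ≤ Real.exp (-(c / ε)) := by
    apply Real.exp_le_exp.2; apply neg_le_neg; gcongr
  -- bound on A
  have hA : Real.exp (x / ε) / (ε ^ 2 * (1 + Real.exp (x / ε)) ^ 2 *
      Real.log (1 + Real.exp (x / ε))) ≤ Real.exp (-(c / ε)) / (ε * c) := by
    have h1 : ε ^ 2 * Real.exp (x / ε) ^ 2 * (x / ε)
        ≤ ε ^ 2 * (1 + Real.exp (x / ε)) ^ 2 * Real.log (1 + Real.exp (x / ε)) := by
      gcongr <;> linarith
    have h2 : Real.exp (x / ε) / (ε ^ 2 * (1 + Real.exp (x / ε)) ^ 2 *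
        Real.log (1 + Real.exp (x / ε)))
        ≤ Real.exp (x / ε) / (ε ^ 2 * Real.exp (x / ε) ^ 2 * (x / ε)) := by gcongr
    have h3 : Real.exp (x / ε) / (ε ^ 2 * Real.exp (x / ε) ^ 2 * (x / ε))
        = Real.exp (-(x / ε)) / (ε * x) := by
      rw [Real.exp_neg]; field_simp
    have h4 : Real.exp (-(x / ε)) / (ε * x) ≤ Real.exp (-(c / ε)) / (ε * c) := by gcongr
    calc _ ≤ Real.exp (x / ε) / (ε ^ 2 * Real.exp (x / ε) ^ 2 * (x / ε)) := h2
      _ = Real.exp (-(x / ε)) / (ε * x) := h3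
      _ ≤ Real.exp (-(c / ε)) / (ε * c) := h4
  have hdecomp := geps2_decomp ε x hε hx0
  have hsq : 1 / x ^ 2 - (logGepsDeriv ε x) ^ 2
      = (1 / x - logGepsDeriv ε x) * (1 / x + logGepsDeriv ε x) := by
    have : (1:ℝ) / x ^ 2 = (1 / x) ^ 2 := by rw [one_div, one_div, ← inv_pow]
    rw [this]; ring
  have h2c : (2:ℝ) / c = 1 / c + 1 / c := by ring
  have hprod : (1 / x - logGepsDeriv ε x) * (1 / x + logGepsDeriv ε x)
      ≤ ((1 / c + ε / c ^ 2) * Real.exp (-(c / ε))) * (2 / c) := by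
    apply mul_le_mul hB1 (by linarith) (by linarith [hd0, hx0, one_div_pos.2 hx0]) (by positivity)
  constructor
  · rw [hdecomp]
    have : Real.exp (x / ε) / (ε ^ 2 * (1 + Real.exp (x / ε)) ^ 2 *
        Real.log (1 + Real.exp (x / ε))) - (logGepsDeriv ε x) ^ 2 + 1 / x ^ 2
        = Real.exp (x / ε) / (ε ^ 2 * (1 + Real.exp (x / ε)) ^ 2 *
          Real.log (1 + Real.exp (x / ε)))
          + (1 / x ^ 2 - (logGepsDeriv ε x) ^ 2) := by ring
    rw [this, hsq]
    nlinarith [hA, hprod]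
  · rw [hdecomp]
    have h0 : (0:ℝ) ≤ Real.exp (x / ε) / (ε ^ 2 * (1 + Real.exp (x / ε)) ^ 2 *
        Real.log (1 + Real.exp (x / ε))) := by positivity
    have h1 : (logGepsDeriv ε x) ^ 2 ≤ 1 / x ^ 2 := by
      have : (1:ℝ) / x ^ 2 = (1 / x) ^ 2 := by rw [one_div, one_div, ← inv_pow]
      rw [this]
      exact pow_le_pow_left₀ hd0 hdle 2
    linarith

-- limit lemmas
lemma tendsto_cdiv (c : ℝ) (hc : 0 < c) :
    Tendsto (fun ε : ℝ => c / ε) (nhdsWithin 0 (Set.Ioi 0)) atTop := by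
  have h : Tendsto (fun ε : ℝ => ε⁻¹) (nhdsWithin 0 (Set.Ioi 0)) atTop := tendsto_inv_nhdsGT_zero
  have := Tendsto.const_mul_atTop hc h
  simpa [div_eq_mul_inv] using this

lemma tendsto_exp_neg_cdiv (c : ℝ) (hc : 0 < c) :
    Tendsto (fun ε : ℝ => Real.exp (-(c / ε))) (nhdsWithin 0 (Set.Ioi 0)) (nhds 0) :=
  Real.tendsto_exp_atBot.comp (tendsto_neg_atTop_atBot.comp (tendsto_cdiv c hc))

lemma tendsto_exp_neg_cdiv_div (c : ℝ) (hc : 0 < c) :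
    Tendsto (fun ε : ℝ => Real.exp (-(c / ε)) / ε) (nhdsWithin 0 (Set.Ioi 0)) (nhds 0) := by
  have h := (tendsto_pow_mul_exp_neg_atTop_nhds_zero 1).comp (tendsto_cdiv c hc)
  have h2 : Tendsto (fun ε : ℝ => (1 / c) * ((c / ε) ^ 1 * Real.exp (-(c / ε))))
      (nhdsWithin 0 (Set.Ioi 0)) (nhds 0) := by
    have := h.const_mul (1 / c)
    simpa using this
  apply h2.congr'
  filter_upwards [self_mem_nhdsWithin] with ε (hε : ε ∈ Set.Ioi (0:ℝ))
  have hε0 : (ε:ℝ) ≠ 0 := ne_of_gt hε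
  field_simp

lemma uniform_of_bound {F : ℝ → ℝ → ℝ} {f : ℝ → ℝ} {b : ℝ → ℝ} {c : ℝ}
    (hb : Tendsto b (nhdsWithin 0 (Set.Ioi 0)) (nhds 0))
    (h : ∀ ε : ℝ, 0 < ε → ∀ x ∈ Set.Ici c, |f x - F ε x| ≤ b ε) :
    TendstoUniformlyOn F f (nhdsWithin 0 (Set.Ioi 0)) (Set.Ici c) := by
  rw [Metric.tendstoUniformlyOn_iff]
  intro δ hδ
  have hev : ∀ᶠ ε in nhdsWithin (0:ℝ) (Set.Ioi 0), b ε < δ :=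
    hb.eventually (Filter.Tendsto.eventually_lt_const hδ tendsto_id)
  filter_upwards [hev, self_mem_nhdsWithin] with ε h1 (h2 : ε ∈ Set.Ioi (0:ℝ))
  intro x hx
  rw [Real.dist_eq]
  exact lt_of_le_of_lt (h ε h2 x hx) h1

theorem log_geps_derivs_uniform_convergence_on_Ici (c : ℝ) (hc : 0 < c) :
    TendstoUniformlyOn (fun ε : ℝ => fun x : ℝ => logGepsDeriv ε x)
        (fun x : ℝ => 1 / x) (nhdsWithin 0 (Set.Ioi 0)) (Set.Ici c) ∧
      TendstoUniformlyOn (fun ε : ℝ => fun x : ℝ => logGepsDeriv2 ε x)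
        (fun x : ℝ => -(1 / x ^ 2)) (nhdsWithin 0 (Set.Ioi 0)) (Set.Ici c) := by
  have hexp := tendsto_exp_neg_cdiv c hc
  constructor
  · apply uniform_of_bound (b := fun ε => (1 / c + ε / c ^ 2) * Real.exp (-(c / ε)))
    · have hcoef : Tendsto (fun ε : ℝ => 1 / c + ε / c ^ 2) (nhdsWithin 0 (Set.Ioi 0))
          (nhds (1 / c + 0 / c ^ 2)) := by
        apply Tendsto.mono_left _ nhdsWithin_le_nhds
        exact (Continuous.tendsto (by continuity) 0)
      have := hcoef.mul hexp
      simpa using this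
    · intro ε hε x hx
      obtain ⟨h1, h2⟩ := geps_bound1 c ε x hc hε hx
      rw [abs_of_nonneg h2]
      exact h1
  · apply uniform_of_bound (b := fun ε =>
      Real.exp (-(c / ε)) / (ε * c) + (2 / c) * ((1 / c + ε / c ^ 2) * Real.exp (-(c / ε))))
    · have h1 : Tendsto (fun ε : ℝ => Real.exp (-(c / ε)) / (ε * c))
          (nhdsWithin 0 (Set.Ioi 0)) (nhds 0) := by
        have h := (tendsto_exp_neg_cdiv_div c hc).div_const c
        simpa [div_div] using h
      have hcoef : Tendsto (fun ε : ℝ => (2 / c) * (1 / c + ε / c ^ 2))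
          (nhdsWithin 0 (Set.Ioi 0)) (nhds ((2 / c) * (1 / c + 0 / c ^ 2))) := by
        apply Tendsto.mono_left _ nhdsWithin_le_nhds
        exact (Continuous.tendsto (by continuity) 0)
      have h2 := hcoef.mul hexp
      have h3 := h1.add h2
      simp only [mul_assoc] at h3 ⊢
      simpa using h3
    · intro ε hε x hx
      obtain ⟨h1, h2⟩ := geps_bound2 c ε x hc hε hx
      have : (fun x : ℝ => -(1 / x ^ 2)) x - logGepsDeriv2 ε x
          = -(logGepsDeriv2 ε x + 1 / x ^ 2) := by ring
      rw [this, abs_neg, abs_of_nonneg h2]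
      exact h1
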